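/- Let h : ℝ → ℂ be measurable with |h(x)| ≤ C e^{−δ|x|} for some C, δ > 0, and suppose ∫ x^n h(x) dx = 0 for all n ∈ ℕ₀. Then h = 0 almost everywhere. -/

import Mathlib

open MeasureTheory Complex Set
open scoped FourierTransform Nat Real ContDiff

private lemma nat_choose_le_two_pow (n k : ℕ) : n.choose k ≤ 2 ^ n := by
  rcases le_or_gt k n with hk | hk
  · calc n.choose k ≤ ∑ i ∈ Finset.range (n + 1), n.choose i :=
        Finset.single_le_sum (fun i _ => Nat.zero_le _) (Finset.mem_range.2 (Nat.lt_succ_of_le hk))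
    _ = 2 ^ n := Nat.sum_range_choose n
  · simp [Nat.choose_eq_zero_of_lt hk]

private lemma majorant_integrable {δ : ℝ} (hδ : 0 < δ) (k : ℕ) :
    Integrable (fun x : ℝ => |x| ^ k * Real.exp (-δ * |x|)) := by
  have int_Ioi : IntegrableOn (fun x : ℝ => |x| ^ k * Real.exp (-δ * |x|)) (Ioi 0) := by
    have h0 := integrableOn_rpow_mul_exp_neg_mul_rpow (p := 1) (s := (k : ℝ)) (b := δ)
      (lt_of_lt_of_le neg_one_lt_zero (Nat.cast_nonneg k)) zero_lt_one hδ
    refine h0.congr_fun (fun x hx => ?_) measurableSet_Ioi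
    beta_reduce
    rw [Real.rpow_one, Real.rpow_natCast, abs_of_pos hx]
  have int_Iic : IntegrableOn (fun x : ℝ => |x| ^ k * Real.exp (-δ * |x|)) (Iic 0) := by
    rw [← Measure.map_neg_eq_self (volume : Measure ℝ)]
    have m : MeasurableEmbedding fun x : ℝ => -x := (Homeomorph.neg ℝ).measurableEmbedding
    rw [m.integrableOn_map_iff]
    simp_rw [Function.comp_def, abs_neg, neg_preimage, neg_Iic, neg_zero]
    exact (integrableOn_Ici_iff_integrableOn_Ioi).mpr int_Ioi
  have := int_Iic.union int_Ioi
  rwa [Iic_union_Ioi, integrableOn_univ] at this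

private lemma majorant_integral_le {δ : ℝ} (hδ : 0 < δ) (k : ℕ) :
    ∫ x : ℝ, |x| ^ k * Real.exp (-δ * |x|) ≤ 2 * (k ! : ℝ) / δ ^ (k + 1) := by
  have h1 : ∫ x : ℝ, |x| ^ k * Real.exp (-δ * |x|)
      = 2 * ∫ x in Ioi (0 : ℝ), x ^ k * Real.exp (-δ * x) :=
    integral_comp_abs (f := fun x => x ^ k * Real.exp (-δ * x))
  have h2 : ∫ x in Ioi (0 : ℝ), x ^ k * Real.exp (-δ * x)
      = (1 / δ) ^ ((k : ℝ) + 1) * Real.Gamma ((k : ℝ) + 1) := by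
    rw [← Real.integral_rpow_mul_exp_neg_mul_Ioi (by positivity) hδ]
    refine setIntegral_congr_fun measurableSet_Ioi (fun x hx => ?_) |>.symm
    rw [add_sub_cancel_right, Real.rpow_natCast, neg_mul]
  have h3 : Real.Gamma ((k : ℝ) + 1) = (k ! : ℝ) := by
    exact_mod_cast Real.Gamma_nat_eq_factorial k
  have h4 : ((1 : ℝ) / δ) ^ ((k : ℝ) + 1) = (1 / δ) ^ (k + 1) := by
    rw [show ((k : ℝ) + 1) = ((k + 1 : ℕ) : ℝ) by push_cast; ring, Real.rpow_natCast]
  rw [h1, h2, h3, h4]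
  apply le_of_eq
  rw [div_pow, one_pow]
  field_simp

private lemma norm_key (h : ℝ → ℂ) (k : ℕ) (t x : ℝ) :
    ‖(x : ℂ) ^ k * Complex.exp (t * x * Complex.I) * h x‖ = |x| ^ k * ‖h x‖ := by
  rw [norm_mul, norm_mul, norm_pow, Complex.norm_real, Real.norm_eq_abs,
    show ((t : ℂ) * x * Complex.I) = ((t * x : ℝ) : ℂ) * Complex.I by push_cast; ring]
  rw [Complex.norm_exp_ofReal_mul_I, mul_one]

private lemma key_integrable {h : ℝ → ℂ} (hm : Measurable h) {C δ : ℝ} (hδ : 0 < δ)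
    (hbound : ∀ x, ‖h x‖ ≤ C * Real.exp (-δ * |x|)) (k : ℕ) (t : ℝ) :
    Integrable fun x : ℝ => (x : ℂ) ^ k * Complex.exp (t * x * Complex.I) * h x := by
  have hmeas : AEStronglyMeasurable
      (fun x : ℝ => (x : ℂ) ^ k * Complex.exp (t * x * Complex.I) * h x) volume := by
    apply Measurable.aestronglyMeasurable
    exact ((Complex.measurable_ofReal.pow_const k).mul
      (Complex.measurable_exp.comp ((Complex.measurable_ofReal.const_mul _).mul_const _))).mul hm
  refine ((majorant_integrable hδ k).const_mul C).mono' hmeas ?_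
  filter_upwards with x
  rw [norm_key]
  calc |x| ^ k * ‖h x‖ ≤ |x| ^ k * (C * Real.exp (-δ * |x|)) := by
        gcongr; exact hbound x
    _ = C * (|x| ^ k * Real.exp (-δ * |x|)) := by ring

private lemma moment_norm_le {h : ℝ → ℂ} (hm : Measurable h) {C δ : ℝ} (hC : 0 < C) (hδ : 0 < δ)
    (hbound : ∀ x, ‖h x‖ ≤ C * Real.exp (-δ * |x|)) (k : ℕ) :
    ∫ x : ℝ, |x| ^ k * ‖h x‖ ≤ C * (2 * (k ! : ℝ) / δ ^ (k + 1)) := by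
  have hint : Integrable (fun x : ℝ => |x| ^ k * ‖h x‖) := by
    have := (key_integrable hm hδ hbound k 0).norm
    refine this.congr ?_
    filter_upwards with x
    rw [norm_key]
  calc ∫ x : ℝ, |x| ^ k * ‖h x‖
      ≤ ∫ x : ℝ, C * (|x| ^ k * Real.exp (-δ * |x|)) := by
        refine integral_mono hint ((majorant_integrable hδ k).const_mul C) (fun x => ?_)
        calc |x| ^ k * ‖h x‖ ≤ |x| ^ k * (C * Real.exp (-δ * |x|)) := by
              gcongr; exact hbound x
          _ = C * (|x| ^ k * Real.exp (-δ * |x|)) := by ring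
    _ = C * ∫ x : ℝ, |x| ^ k * Real.exp (-δ * |x|) := integral_const_mul C _
    _ ≤ C * (2 * (k ! : ℝ) / δ ^ (k + 1)) := by
        gcongr
        exact majorant_integral_le hδ k

private lemma key_step {h : ℝ → ℂ} (hm : Measurable h) {C δ : ℝ} (hC : 0 < C) (hδ : 0 < δ)
    (hbound : ∀ x, ‖h x‖ ≤ C * Real.exp (-δ * |x|)) {t s : ℝ} (hs : |s| < δ / 2)
    (ht : ∀ n : ℕ, ∫ x : ℝ, (x : ℂ) ^ n * Complex.exp (t * x * Complex.I) * h x = 0) (n : ℕ) :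
    ∫ x : ℝ, (x : ℂ) ^ n * Complex.exp ((t + s) * x * Complex.I) * h x = 0 := by
  set F : ℕ → ℝ → ℂ := fun m x => ((s : ℂ) * Complex.I) ^ m / m ! *
    ((x : ℂ) ^ (n + m) * Complex.exp (t * x * Complex.I) * h x) with hF
  have hFint : ∀ m, Integrable (F m) := fun m =>
    (key_integrable hm hδ hbound (n + m) t).const_mul _
  -- bound on ∫ ‖F m‖
  have hfac : ∀ m : ℕ, (((n + m)! : ℝ)) ≤ 2 ^ (n + m) * m ! * n ! := by
    intro m
    have h1 : (n + m).choose m * m ! * n ! = (n + m)! := by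
      have := Nat.choose_mul_factorial_mul_factorial (Nat.le_add_left m n)
      simpa [Nat.add_sub_cancel] using this
    have h2 : (n + m).choose m ≤ 2 ^ (n + m) := nat_choose_le_two_pow _ _
    calc (((n + m)! : ℝ)) = ((n + m).choose m : ℝ) * m ! * n ! := by exact_mod_cast h1.symm
      _ ≤ 2 ^ (n + m) * m ! * n ! := by
          gcongr
          exact_mod_cast h2
  have hnorm : ∀ m : ℕ, ∫ x : ℝ, ‖F m x‖ ≤
      (2 * C * (n ! : ℝ) * 2 ^ n / δ ^ (n + 1)) * (2 * |s| / δ) ^ m := by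
    intro m
    have e1 : ∀ x : ℝ, ‖F m x‖ = |s| ^ m / m ! * (|x| ^ (n + m) * ‖h x‖) := by
      intro x
      rw [hF]
      simp only []
      rw [norm_mul, norm_key h (n + m) t x]
      congr 1
      rw [norm_div, norm_pow, norm_mul, Complex.norm_I, Complex.norm_real, Real.norm_eq_abs,
        mul_one, Complex.norm_natCast]
    have e2 : ∫ x : ℝ, ‖F m x‖ = |s| ^ m / m ! * ∫ x : ℝ, |x| ^ (n + m) * ‖h x‖ := by
      simp_rw [e1]
      exact integral_const_mul _ _
    rw [e2]
    have e3 : |s| ^ m / m ! * ∫ x : ℝ, |x| ^ (n + m) * ‖h x‖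
        ≤ |s| ^ m / m ! * (C * (2 * ((n + m)! : ℝ) / δ ^ (n + m + 1))) := by
      gcongr
      exact moment_norm_le hm hC hδ hbound (n + m)
    refine e3.trans ?_
    calc |s| ^ m / m ! * (C * (2 * ((n + m)! : ℝ) / δ ^ (n + m + 1)))
        = 2 * C * ((n + m)! : ℝ) * |s| ^ m / (m ! * δ ^ (n + m + 1)) := by ring
      _ ≤ 2 * C * (2 ^ (n + m) * m ! * n !) * |s| ^ m / (m ! * δ ^ (n + m + 1)) := by
          gcongr
          exact hfac m
      _ = (2 * C * (n ! : ℝ) * 2 ^ n / δ ^ (n + 1)) * (2 * |s| / δ) ^ m := by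
          have hm0 : (m ! : ℝ) ≠ 0 := by positivity
          have hδ0 : δ ≠ 0 := hδ.ne'
          rw [div_pow]
          field_simp
          ring
  have hsum : Summable fun m => ∫ x : ℝ, ‖F m x‖ := by
    have hr : 2 * |s| / δ < 1 := by
      rw [div_lt_one hδ]
      linarith [hs]
    have hg : Summable fun m : ℕ => (2 * C * (n ! : ℝ) * 2 ^ n / δ ^ (n + 1)) * (2 * |s| / δ) ^ m :=
      (summable_geometric_of_lt_one (by positivity) hr).mul_left _
    exact Summable.of_nonneg_of_le (fun m => integral_nonneg fun x => norm_nonneg _)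
      (fun m => hnorm m) hg
  have hpt : ∀ x : ℝ, (x : ℂ) ^ n * Complex.exp ((t + s) * x * Complex.I) * h x
      = ∑' m, F m x := by
    intro x
    have e1 : ∀ m : ℕ, F m x = ((s : ℂ) * x * Complex.I) ^ m / m ! *
        ((x : ℂ) ^ n * Complex.exp (t * x * Complex.I) * h x) := by
      intro m
      rw [hF]
      simp only []
      rw [pow_add]
      ring
    rw [tsum_congr e1, tsum_mul_right]
    have e2 : (∑' m : ℕ, ((s : ℂ) * x * Complex.I) ^ m / m !)
        = Complex.exp ((s : ℂ) * x * Complex.I) := by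
      rw [Complex.exp_eq_exp_ℂ, NormedSpace.exp_eq_tsum_div]
    rw [e2]
    have e3 : Complex.exp (((t : ℂ) + (s : ℂ)) * x * Complex.I)
        = Complex.exp ((t : ℂ) * x * Complex.I) * Complex.exp ((s : ℂ) * x * Complex.I) := by
      rw [← Complex.exp_add]
      congr 1
      ring
    rw [e3]
    ring
  calc ∫ x : ℝ, (x : ℂ) ^ n * Complex.exp ((t + s) * x * Complex.I) * h x
      = ∫ x : ℝ, ∑' m, F m x := by
        refine integral_congr_ae ?_
        filter_upwards with x
        exact hpt x
    _ = ∑' m, ∫ x : ℝ, F m x :=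
        (integral_tsum_of_summable_integral_norm hFint hsum).symm
    _ = 0 := by
        have : ∀ m : ℕ, ∫ x : ℝ, F m x = 0 := by
          intro m
          rw [hF]
          simp only []
          rw [integral_const_mul, ht (n + m), mul_zero]
        simp [this]

private lemma key_all {h : ℝ → ℂ} (hm : Measurable h) {C δ : ℝ} (hC : 0 < C) (hδ : 0 < δ)
    (hbound : ∀ x, ‖h x‖ ≤ C * Real.exp (-δ * |x|))
    (hmom : ∀ n : ℕ, ∫ x : ℝ, (x : ℂ) ^ n * h x = 0) (t : ℝ) (n : ℕ) :
    ∫ x : ℝ, (x : ℂ) ^ n * Complex.exp (t * x * Complex.I) * h x = 0 := by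
  set N : ℕ := ⌈2 * |t| / δ⌉₊ + 1 with hN
  have hN0 : 0 < (N : ℝ) := by positivity
  have hNgt : 2 * |t| / δ < (N : ℝ) := by
    calc 2 * |t| / δ ≤ (⌈2 * |t| / δ⌉₊ : ℝ) := Nat.le_ceil _
      _ < (N : ℝ) := by
          rw [hN]
          exact_mod_cast Nat.lt_succ_self _
  have hs : |t / N| < δ / 2 := by
    rw [abs_div, abs_of_pos hN0]
    rw [div_lt_div_iff₀ hN0 two_pos] at *
    rw [div_lt_iff₀ hδ] at hNgt
    linarith
  have key : ∀ j : ℕ, ∀ m : ℕ,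
      ∫ x : ℝ, (x : ℂ) ^ m * Complex.exp ((j * (t / N) : ℝ) * x * Complex.I) * h x = 0 := by
    intro j
    induction j with
    | zero =>
        intro m
        have := hmom m
        simpa using this
    | succ j ih =>
        intro m
        have step := key_step hm hC hδ hbound hs ih m
        rw [show ((((j + 1 : ℕ) : ℝ) * (t / N) : ℝ) : ℂ)
            = (((j : ℝ) * (t / N) : ℝ) : ℂ) + ((t / N : ℝ) : ℂ) by push_cast; ring]
        exact step
  have := key N n
  have harg : ((N : ℝ) * (t / N)) = t := by
    field_simp
  rwa [harg] at this

private lemma myFourier_zero {h : ℝ → ℂ} (hm : Measurable h) {C δ : ℝ} (hC : 0 < C) (hδ : 0 < δ)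
    (hbound : ∀ x, ‖h x‖ ≤ C * Real.exp (-δ * |x|))
    (hmom : ∀ n : ℕ, ∫ x : ℝ, (x : ℂ) ^ n * h x = 0) (ξ : ℝ) :
    𝓕 h ξ = 0 := by
  rw [Real.fourier_real_eq_integral_exp_smul]
  have := key_all hm hC hδ hbound hmom (-2 * Real.pi * ξ) 0
  rw [← this]
  refine integral_congr_ae ?_
  filter_upwards with x
  rw [pow_zero, one_mul, smul_eq_mul]
  congr 2
  push_cast
  ring

private lemma h_integrable {h : ℝ → ℂ} (hm : Measurable h) {C δ : ℝ} (hδ : 0 < δ)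
    (hbound : ∀ x, ‖h x‖ ≤ C * Real.exp (-δ * |x|)) : Integrable h := by
  have := key_integrable hm hδ hbound 0 0
  refine this.congr ?_
  filter_upwards with x
  simp

private lemma smul_test_zero {h : ℝ → ℂ} (hm : Measurable h) {C δ : ℝ} (hC : 0 < C) (hδ : 0 < δ)
    (hbound : ∀ x, ‖h x‖ ≤ C * Real.exp (-δ * |x|))
    (hmom : ∀ n : ℕ, ∫ x : ℝ, (x : ℂ) ^ n * h x = 0)
    (g : ℝ → ℝ) (g_diff : ContDiff ℝ ∞ g) (g_supp : HasCompactSupport g) :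
    ∫ x : ℝ, g x • h x = 0 := by
  have hint : Integrable h := h_integrable hm hδ hbound
  set gc : ℝ → ℂ := fun x => (g x : ℂ) with hgc
  have gc_diff : ContDiff ℝ ∞ gc := Complex.ofRealCLM.contDiff.comp g_diff
  have gc_supp : HasCompactSupport gc := by
    have : gc = Complex.ofReal ∘ g := rfl
    rw [this]
    exact g_supp.comp_left (by simp)
  let G : SchwartzMap ℝ ℂ :=
    { toFun := gc
      smooth' := gc_diff
      decay' := by
        intro k n
        have hcs : HasCompactSupport (fun x : ℝ => ‖x‖ ^ k * ‖iteratedFDeriv ℝ n gc x‖) :=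
          ((gc_supp.iteratedFDeriv n).norm).mul_left
        have hcont : Continuous (fun x : ℝ => ‖x‖ ^ k * ‖iteratedFDeriv ℝ n gc x‖) :=
          ((continuous_norm.pow k).mul
            (gc_diff.continuous_iteratedFDeriv (by exact_mod_cast le_top)).norm)
        obtain ⟨B, hB⟩ := hcont.bounded_above_of_compact_support hcs
        refine ⟨B, fun x => ?_⟩
        have hx := hB x
        rw [Real.norm_eq_abs] at hx
        exact (le_abs_self _).trans hx }
  set phi := (SchwartzMap.fourierTransformCLE ℝ (SchwartzMap ℝ ℂ)).symm G with hphidef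
  have hphi : 𝓕 (⇑phi) = ⇑G := by
    have h1 : (SchwartzMap.fourierTransformCLE ℝ (SchwartzMap ℝ ℂ)) phi = G :=
      (SchwartzMap.fourierTransformCLE ℝ (SchwartzMap ℝ ℂ)).apply_symm_apply G
    calc 𝓕 ⇑phi = ⇑((SchwartzMap.fourierTransformCLE ℝ (SchwartzMap ℝ ℂ)) phi) := by
          rfl
      _ = ⇑G := by rw [h1]
  have hflip : (innerₗ ℝ).flip = innerₗ ℝ := by
    apply LinearMap.ext; intro x; apply LinearMap.ext; intro y
    simpa using real_inner_comm y x
  have key0 : ∫ ξ : ℝ, (VectorFourier.fourierIntegral 𝐞 volume (innerₗ ℝ) ⇑phi ξ) • h ξ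
      = ∫ x : ℝ, ⇑phi x • (VectorFourier.fourierIntegral 𝐞 volume (innerₗ ℝ) h x) := by
    have := VectorFourier.integral_fourierIntegral_smul_eq_flip (L := innerₗ ℝ)
      (μ := volume) (ν := volume)
      Real.continuous_fourierChar continuous_inner (phi.integrable (μ := volume)) hint
    rwa [hflip] at this
  have hright : ∫ x : ℝ, phi x • VectorFourier.fourierIntegral 𝐞 volume (innerₗ ℝ) h x = 0 := by
    have e : (fun x : ℝ => phi x • VectorFourier.fourierIntegral 𝐞 volume (innerₗ ℝ) h x)
        = fun _ => (0 : ℂ) := by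
      funext x
      have e2 : VectorFourier.fourierIntegral 𝐞 volume (innerₗ ℝ) h x = 𝓕 h x := rfl
      rw [e2, myFourier_zero hm hC hδ hbound hmom x, smul_zero]
    rw [e, integral_zero]
  have hleft : ∫ x : ℝ, g x • h x
      = ∫ ξ : ℝ, VectorFourier.fourierIntegral 𝐞 volume (innerₗ ℝ) (⇑phi) ξ • h ξ := by
    refine integral_congr_ae ?_
    filter_upwards with x
    have e1 : VectorFourier.fourierIntegral 𝐞 volume (innerₗ ℝ) (⇑phi) x = 𝓕 (⇑phi) x := rfl
    rw [e1, hphi]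
    show g x • h x = gc x • h x
    rw [hgc, smul_eq_mul, Complex.real_smul]
  rw [hleft, key0, hright]

/-- If `h : ℝ → ℂ` is measurable with `|h(x)| ≤ C e^{-δ|x|}` and all moments
`∫ xⁿ h(x) dx` vanish, then `h = 0` almost everywhere. -/
theorem stmt10 (h : ℝ → ℂ) (hm : Measurable h) (C δ : ℝ) (hC : 0 < C) (hδ : 0 < δ)
    (hbound : ∀ x : ℝ, ‖h x‖ ≤ C * Real.exp (-δ * |x|))
    (hmom : ∀ n : ℕ, ∫ x : ℝ, (x : ℂ) ^ n * h x = 0) :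
    ∀ᵐ x : ℝ, h x = 0 := by
  have hint : Integrable h := h_integrable hm hδ hbound
  exact ae_eq_zero_of_integral_contDiff_smul_eq_zero hint.locallyIntegrable
    (fun g g_diff g_supp => smul_test_zero hm hC hδ hbound hmom g g_diff g_supp)
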